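/- Let λ be a special type B partition of 2n+1. Row procedure: from the list of parts of λ delete all even entries; then repeatedly delete two equal adjacent entries occupying positions 2t and 2t−1 for some t ≥ 1, until no such pair remains; let the number of remaining entries be 2q_r+1. Column procedure: take the padded column list of λ (padded with zeros to even length); repeatedly delete two equal adjacent entries at positions 2t+1 and 2t until no such pair remains; then repeatedly delete two equal adjacent entries of even value at positions 2t and 2t−1 until no such pair remains; let the number of remaining entries be 2q_c+2. Then both counts are independent of the choices of deletions, and q_r = q_c. (This common value q is the rank of the Lusztig quotient Ā(O) ≅ (ℤ/2ℤ)^q of the corresponding special orbit O of SO(2n+1,ℂ); the statement is the agreement of the row description and the column description of Ā(O).) -/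

import Mathlib

/-- `l` is a partition of `N`: a weakly decreasing list of positive integers with sum `N`. -/
def IsPartitionOf (N : ℕ) (l : List ℕ) : Prop :=
  l.Pairwise (· ≥ ·) ∧ (∀ x ∈ l, 0 < x) ∧ l.sum = N

/-- the `j`-th column length `c_j(λ) = #{i : λ_i ≥ j}`. -/
def colLen (l : List ℕ) (j : ℕ) : ℕ := l.countP (fun x => decide (j ≤ x))

/-- the transpose partition, as the list `c_1 ≥ c_2 ≥ ⋯ ≥ c_{λ_1}` of column lengths. -/
def transposeList (l : List ℕ) : List ℕ :=
  (List.range (l.foldr max 0)).map (fun j => colLen l (j + 1))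

/-- pad a list with one zero at the end if necessary so that its length is even. -/
def padToEven (c : List ℕ) : List ℕ := if Even c.length then c else c ++ [0]

/-- Delete two equal adjacent entries occupying positions `2t+1` and `2t` for some `t ≥ 0`
(positions in a list of length `m` are numbered `m-1, …, 1, 0` from first to last). -/
def delStepE (L L' : List ℕ) : Prop :=
  ∃ (a : ℕ) (l₁ l₂ : List ℕ), Even l₂.length ∧ L = l₁ ++ a :: a :: l₂ ∧ L' = l₁ ++ l₂

/-- Delete two equal adjacent entries occupying positions `2t` and `2t-1` for some `t ≥ 1`. -/
def delStepO (L L' : List ℕ) : Prop :=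
  ∃ (a : ℕ) (l₁ l₂ : List ℕ), Odd l₂.length ∧ L = l₁ ++ a :: a :: l₂ ∧ L' = l₁ ++ l₂

/-- Delete two equal adjacent entries of even value at positions `2t` and `2t-1`, `t ≥ 1`. -/
def delStepOEvenVal (L L' : List ℕ) : Prop :=
  ∃ (a : ℕ) (l₁ l₂ : List ℕ),
    Even a ∧ Odd l₂.length ∧ L = l₁ ++ a :: a :: l₂ ∧ L' = l₁ ++ l₂






/-- generic deletion step -/
def dg (vp pp : ℕ → Prop) (L L' : List ℕ) : Prop :=
  ∃ a l₁ l₂, vp a ∧ pp l₂.length ∧ L = l₁ ++ a :: a :: l₂ ∧ L' = l₁ ++ l₂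

lemma append_split {l₁ m₁ s t : List ℕ} (h : l₁ ++ s = m₁ ++ t) (hl : s.length ≤ t.length) :
    ∃ w, t = w ++ s ∧ l₁ = m₁ ++ w := by
  have hlen : l₁.length + s.length = m₁.length + t.length := by
    have := congrArg List.length h; simpa using this
  have hm : m₁.length ≤ l₁.length := by omega
  refine ⟨l₁.drop m₁.length, ?_, ?_⟩
  · have h1 : m₁ = l₁.take m₁.length := by
      have h2 := congrArg (List.take m₁.length) h
      rw [List.take_append_of_le_length hm] at h2
      rw [h2, List.take_left]
    have h3 : l₁ = m₁ ++ l₁.drop m₁.length := by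
      conv_lhs => rw [← List.take_append_drop m₁.length l₁, ← h1]
    rw [h3, List.append_assoc] at h
    exact (List.append_cancel_left h).symm
  · conv_lhs => rw [← List.take_append_drop m₁.length l₁]
    congr 1
    have h2 := congrArg (List.take m₁.length) h
    rw [List.take_append_of_le_length hm] at h2
    rw [h2, List.take_left]

lemma dg_diamond {vp pp : ℕ → Prop} (hpp : ∀ n, pp (n + 2) ↔ pp n)
    (hpp1 : ∀ n, pp n → ¬ pp (n + 1)) :
    ∀ {L M₁ M₂}, dg vp pp L M₁ → dg vp pp L M₂ →
      M₁ = M₂ ∨ ∃ N, dg vp pp M₁ N ∧ dg vp pp M₂ N := by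
  have core : ∀ {L M₁ M₂}, dg vp pp L M₁ → dg vp pp L M₂ →
      (∃ a l₁ l₂ b m₁ m₂, vp a ∧ pp l₂.length ∧ L = l₁ ++ a :: a :: l₂ ∧ M₁ = l₁ ++ l₂ ∧
        vp b ∧ pp m₂.length ∧ L = m₁ ++ b :: b :: m₂ ∧ M₂ = m₁ ++ m₂ ∧
        l₂.length ≤ m₂.length) →
      M₁ = M₂ ∨ ∃ N, dg vp pp M₁ N ∧ dg vp pp M₂ N := by
    rintro L M₁ M₂ _ _ ⟨a, l₁, l₂, b, m₁, m₂, hva, hpl, hL1, hM1, hvb, hpm, hL2, hM2, hle⟩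
    rcases eq_or_lt_of_le hle with heq | hlt
    · -- same position
      have h := hL1.symm.trans hL2
      have hlenpre : l₁.length = m₁.length := by
        have := congrArg List.length h; simp at this; omega
      obtain ⟨h1, h2⟩ := List.append_inj h hlenpre
      injection h2 with h3 h4; injection h4 with h5 h6
      left; rw [hM1, hM2, h1, h6]
    · -- disjoint
      have hlt2 : l₂.length + 2 ≤ m₂.length := by
        rcases Nat.lt_or_ge (l₂.length + 1) m₂.length with h' | h'
        · omega
        · exfalso
          have : m₂.length = l₂.length + 1 := by omega
          exact hpp1 l₂.length hpl (this ▸ hpm)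
      have h := hL1.symm.trans hL2
      obtain ⟨w, hw1, hw2⟩ := append_split h (by simp; omega)
      match w, hw1 with
      | [], hw1 => exfalso; have := congrArg List.length hw1; simp at this; omega
      | [x], hw1 => exfalso; have := congrArg List.length hw1; simp at this; omega
      | x :: y :: w', hw1 =>
        injection hw1 with e1 e2; injection e2 with e3 e4
        subst e1; subst e3
        right
        refine ⟨m₁ ++ w' ++ l₂, ⟨b, m₁, w' ++ l₂, hvb, ?_, ?_, ?_⟩,
          ⟨a, m₁ ++ w', l₂, hva, hpl, ?_, ?_⟩⟩
        · have : m₂.length = w'.length + (l₂.length + 2) := by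
            have := congrArg List.length e4; simp at this; omega
          have h2 := (hpp (w'.length + l₂.length)).2
          rw [show w'.length + l₂.length + 2 = m₂.length by omega] at *
          simp only [List.length_append]
          exact (hpp (w'.length + l₂.length)).1 (by rw [show w'.length + l₂.length + 2 = m₂.length by omega]; exact hpm)
        · rw [hM1, hw2]; simp
        · simp
        · rw [hM2, e4]; simp
        · simp
  intro L M₁ M₂ h1 h2
  obtain ⟨a, l₁, l₂, hva, hpl, hL1, hM1⟩ := h1
  obtain ⟨b, m₁, m₂, hvb, hpm, hL2, hM2⟩ := h2
  rcases le_total l₂.length m₂.length with hle | hle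
  · exact core ⟨a, l₁, l₂, hva, hpl, hL1, hM1⟩ ⟨b, m₁, m₂, hvb, hpm, hL2, hM2⟩
      ⟨a, l₁, l₂, b, m₁, m₂, hva, hpl, hL1, hM1, hvb, hpm, hL2, hM2, hle⟩
  · rcases core ⟨b, m₁, m₂, hvb, hpm, hL2, hM2⟩ ⟨a, l₁, l₂, hva, hpl, hL1, hM1⟩
      ⟨b, m₁, m₂, a, l₁, l₂, hvb, hpm, hL2, hM2, hva, hpl, hL1, hM1, hle⟩ with h | ⟨N, hn1, hn2⟩
    · exact Or.inl h.symm
    · exact Or.inr ⟨N, hn2, hn1⟩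

lemma terminal_rtg_eq {r : List ℕ → List ℕ → Prop} {M d : List ℕ}
    (h : Relation.ReflTransGen r M d) (t : ∀ M', ¬ r M M') : M = d := by
  rcases Relation.ReflTransGen.cases_head h with rfl | ⟨c, hc, _⟩
  · rfl
  · exact absurd hc (t c)

lemma rtg_terminal_eq {r : List ℕ → List ℕ → Prop}
    (hd : ∀ {L M₁ M₂}, r L M₁ → r L M₂ → M₁ = M₂ ∨ ∃ N, r M₁ N ∧ r M₂ N)
    {L M₁ M₂ : List ℕ} (h1 : Relation.ReflTransGen r L M₁) (t1 : ∀ M', ¬ r M₁ M')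
    (h2 : Relation.ReflTransGen r L M₂) (t2 : ∀ M', ¬ r M₂ M') : M₁ = M₂ := by
  have cr : ∀ a b c, r a b → r a c →
      ∃ d, Relation.ReflGen r b d ∧ Relation.ReflTransGen r c d := by
    intro a b c hab hac
    rcases hd hab hac with rfl | ⟨N, hn1, hn2⟩
    · exact ⟨b, .refl, .refl⟩
    · exact ⟨N, .single hn1, .single hn2⟩
  obtain ⟨d, hd1, hd2⟩ := Relation.church_rosser cr h1 h2
  rw [terminal_rtg_eq hd1 t1, terminal_rtg_eq hd2 t2]





/-- generic pair-reduction -/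
def redg (d : ℕ → Bool) : List ℕ → List ℕ
  | a :: b :: r => if a = b ∧ d a then redg d r else a :: b :: redg d r
  | r => r

lemma redg_nil (d : ℕ → Bool) : redg d [] = [] := rfl
lemma redg_one (d : ℕ → Bool) (a : ℕ) : redg d [a] = [a] := rfl
lemma redg_cons (d : ℕ → Bool) (a b : ℕ) (r : List ℕ) :
    redg d (a :: b :: r) = if a = b ∧ d a then redg d r else a :: b :: redg d (r) := rfl

lemma redg_length_mod (d : ℕ → Bool) : ∀ L : List ℕ, (redg d L).length % 2 = L.length % 2 := by
  intro L
  induction L using redg.induct d with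
  | case1 a b r hg ih => rw [redg_cons, if_pos hg]; simp [ih]; omega
  | case2 a b r hg ih => rw [redg_cons, if_neg hg]; simp [ih]; omega
  | case3 r h =>
    rcases r with _ | ⟨a, _ | ⟨b, r''⟩⟩
    · rfl
    · rfl
    · exact (h a b r'' rfl).elim

lemma pp_parity {pp : ℕ → Prop} (hpp : ∀ n, pp (n + 2) ↔ pp n) {m n : ℕ}
    (h : m % 2 = n % 2) : pp m ↔ pp n := by
  have key : ∀ k a : ℕ, pp (a + 2 * k) ↔ pp a := by
    intro k
    induction k with
    | zero => simp
    | succ k ih => intro a; rw [Nat.mul_succ, ← Nat.add_assoc]; rw [hpp]; exact ih a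
  rcases Nat.le_total m n with hle | hle
  · obtain ⟨k, hk⟩ : ∃ k, n = m + 2 * k := ⟨(n - m) / 2, by omega⟩
    rw [hk, key]
  · obtain ⟨k, hk⟩ : ∃ k, m = n + 2 * k := ⟨(m - n) / 2, by omega⟩
    rw [hk, key]

lemma dg_cons {vp pp : ℕ → Prop} {x : ℕ} {X Y : List ℕ} (h : dg vp pp X Y) :
    dg vp pp (x :: X) (x :: Y) := by
  obtain ⟨a, l₁, l₂, hv, hp, h1, h2⟩ := h
  exact ⟨a, x :: l₁, l₂, hv, hp, by simp [h1], by simp [h2]⟩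

lemma reach_redg {vp pp : ℕ → Prop} {d : ℕ → Bool}
    (hvd : ∀ a, vp a ↔ d a = true) (hpp : ∀ n, pp (n + 2) ↔ pp n) :
    ∀ L : List ℕ, pp L.length → Relation.ReflTransGen (dg vp pp) L (redg d L) := by
  intro L
  induction L using redg.induct d with
  | case1 a b r hg ih =>
    intro hL
    obtain ⟨hab, hda⟩ := hg
    have e : (a :: b :: r).length = r.length + 2 := by simp
    have hr : pp r.length := (hpp r.length).1 (e ▸ hL)
    rw [redg_cons, if_pos ⟨hab, hda⟩]
    exact Relation.ReflTransGen.head ⟨a, [], r, (hvd a).2 hda, hr, by simp [hab], by simp⟩ (ih hr)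
  | case2 a b r hg ih =>
    intro hL
    have e : (a :: b :: r).length = r.length + 2 := by simp
    have hr : pp r.length := (hpp r.length).1 (e ▸ hL)
    rw [redg_cons, if_neg hg]
    exact Relation.ReflTransGen.lift (fun X => a :: b :: X)
      (fun _ _ h => dg_cons (dg_cons h)) _ _ (ih hr)
  | case3 r h =>
    intro _
    cases r with
    | nil => exact .refl
    | cons a r' => cases r' with
      | nil => exact .refl
      | cons b r'' => exact (h a b r'' rfl).elim

lemma term_redg {vp pp : ℕ → Prop} {d : ℕ → Bool}
    (hvd : ∀ a, vp a ↔ d a = true) (hpp : ∀ n, pp (n + 2) ↔ pp n)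
    (hpp1 : ∀ n, pp n → ¬ pp (n + 1)) :
    ∀ L : List ℕ, pp L.length → ∀ M, ¬ dg vp pp (redg d L) M := by
  intro L
  induction L using redg.induct d with
  | case1 a b r hg ih =>
    intro hL M
    have e : (a :: b :: r).length = r.length + 2 := by simp
    have hr : pp r.length := (hpp r.length).1 (e ▸ hL)
    rw [redg_cons, if_pos hg]
    exact ih hr M
  | case2 a b r hg ih =>
    intro hL M hM
    have e : (a :: b :: r).length = r.length + 2 := by simp
    have hr : pp r.length := (hpp r.length).1 (e ▸ hL)
    rw [redg_cons, if_neg hg] at hM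
    obtain ⟨c, l₁, l₂, hv, hp, h1, h2⟩ := hM
    match l₁, h1 with
    | [], h1 =>
      simp at h1
      obtain ⟨e1, e2, e3⟩ := h1
      exact hg ⟨e1.trans e2.symm, by rw [e1]; exact (hvd c).1 hv⟩
    | [x], h1 =>
      simp at h1
      obtain ⟨e1, e2, e3⟩ := h1
      have hlen : (redg d r).length = l₂.length + 1 := by
        rw [e3]; simp
      have hpr : pp (redg d r).length :=
        (pp_parity hpp (redg_length_mod d r)).2 hr
      rw [hlen] at hpr
      exact hpp1 l₂.length hp hpr
    | x :: y :: l₁', h1 =>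
      simp at h1
      obtain ⟨_, _, e3⟩ := h1
      exact ih hr (l₁' ++ l₂) ⟨c, l₁', l₂, hv, hp, e3, rfl⟩
  | case3 r h =>
    intro _ M hM
    obtain ⟨c, l₁, l₂, hv, hp, h1, h2⟩ := hM
    cases r with
    | nil => rw [redg_nil] at h1; have := congrArg List.length h1; simp at this
    | cons a r' => cases r' with
      | nil =>
        rw [redg_one] at h1; have := congrArg List.length h1; simp at this; omega
      | cons b r'' => exact (h a b r'' rfl).elim

/-- reach/term for the stage-2 procedure on `x :: w`. -/
lemma reach_nf2 {vp pp : ℕ → Prop} {d : ℕ → Bool}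
    (hvd : ∀ a, vp a ↔ d a = true) (hpp : ∀ n, pp (n + 2) ↔ pp n)
    (x : ℕ) (w : List ℕ) (hw : pp w.length) :
    Relation.ReflTransGen (dg vp pp) (x :: w) (x :: redg d w) :=
  Relation.ReflTransGen.lift (fun X => x :: X) (fun _ _ h => dg_cons h) _ _ (reach_redg hvd hpp w hw)

lemma term_nf2 {vp pp : ℕ → Prop} {d : ℕ → Bool}
    (hvd : ∀ a, vp a ↔ d a = true) (hpp : ∀ n, pp (n + 2) ↔ pp n)
    (hpp1 : ∀ n, pp n → ¬ pp (n + 1))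
    (x : ℕ) (w : List ℕ) (hw : pp w.length) :
    ∀ M, ¬ dg vp pp (x :: redg d w) M := by
  intro M hM
  obtain ⟨c, l₁, l₂, hv, hp, h1, h2⟩ := hM
  match l₁, h1 with
  | [], h1 =>
    simp at h1
    obtain ⟨e1, e2⟩ := h1
    have hlen : (redg d w).length = l₂.length + 1 := by rw [e2]; simp
    have hpr : pp (redg d w).length := (pp_parity hpp (redg_length_mod d w)).2 hw
    rw [hlen] at hpr
    exact hpp1 l₂.length hp hpr
  | y :: l₁', h1 =>
    simp at h1
    exact term_redg hvd hpp hpp1 w hw (l₁' ++ l₂) ⟨c, l₁', l₂, hv, hp, h1.2, rfl⟩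



def cnt (l : List ℕ) (v : ℕ) : ℕ := l.countP (fun x => decide (v ≤ x))

lemma cnt_cons (x : ℕ) (t : List ℕ) (v : ℕ) :
    cnt (x :: t) v = cnt t v + (if v ≤ x then 1 else 0) := by
  simp [cnt, List.countP_cons]

lemma cnt_split (l : List ℕ) (v : ℕ) : cnt l v = cnt l (v + 1) + l.count v := by
  induction l with
  | nil => simp [cnt]
  | cons x t ih =>
    rw [cnt_cons, cnt_cons, List.count_cons, ih]
    by_cases h1 : v ≤ x <;> by_cases h2 : v + 1 ≤ x <;> by_cases h3 : x = v <;>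
      simp [h1, h2, h3] <;> omega

lemma cnt_anti (l : List ℕ) {v v' : ℕ} (h : v ≤ v') : cnt l v' ≤ cnt l v := by
  induction l with
  | nil => simp [cnt]
  | cons x t ih =>
    rw [cnt_cons, cnt_cons]
    by_cases h1 : v' ≤ x
    · simp [h1, le_trans h h1]; omega
    · split <;> omega

lemma sorted_head_ge {c : ℕ} {w : List ℕ} (hs : List.Pairwise (· ≥ ·) (c :: w)) :
    ∀ x ∈ c :: w, x ≤ c := by
  intro x hx
  rcases List.mem_cons.1 hx with rfl | hx
  · exact le_refl x
  · exact (List.pairwise_cons.1 hs).1 x hx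

lemma headx {x : ℕ} {t : List ℕ} (hs : List.Pairwise (· ≥ ·) (x :: t)) (hx : x ∈ t) :
    ∃ t', t = x :: t' := by
  cases t with
  | nil => exact absurd hx (List.not_mem_nil)
  | cons y t' =>
    have h1 : y ≤ x := (List.pairwise_cons.1 hs).1 y (by simp)
    rcases List.mem_cons.1 hx with rfl | hx'
    · exact ⟨t', rfl⟩
    · have h2 : x ≤ y := (List.pairwise_cons.1 (List.pairwise_cons.1 hs).2).1 x hx'
      exact ⟨t', by rw [Nat.le_antisymm h1 h2]⟩

lemma sorted_cnt {l : List ℕ} (hs : List.Pairwise (· ≥ ·) l) {v : ℕ} (hv : 0 < v) :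
    ∀ r : ℕ, v ≤ l.getD r 0 ↔ r + 1 ≤ cnt l v := by
  induction l with
  | nil => intro r; simp [cnt]; omega
  | cons x t ih =>
    intro r
    have hst := List.pairwise_cons.1 hs
    cases r with
    | zero =>
      rw [List.getD_cons_zero, cnt_cons]
      constructor
      · intro h; rw [if_pos h]; omega
      · intro h
        by_contra hx
        rw [if_neg hx] at h
        have h0 : 0 < cnt t v := by omega
        simp only [cnt] at h0
        obtain ⟨y, hy, hvy⟩ := List.countP_pos_iff.1 h0
        simp only [decide_eq_true_eq] at hvy
        exact hx (le_trans hvy (hst.1 y hy))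
    | succ r =>
      rw [List.getD_cons_succ, ih hst.2 r, cnt_cons]
      by_cases hx : v ≤ x
      · rw [if_pos hx]; omega
      · rw [if_neg hx]
        have ht : cnt t v = 0 := by
          simp only [cnt]
          rw [List.countP_eq_zero]
          intro y hy
          simp only [decide_eq_true_eq, Nat.not_le]
          exact lt_of_le_of_lt (hst.1 y hy) (Nat.not_le.1 hx)
        omega

lemma countP_range_lt (M K : ℕ) :
    (List.range M).countP (fun j => decide (j < K)) = min M K := by
  induction M with
  | zero => simp
  | succ M ih =>
    rw [List.range_succ, List.countP_append, ih]
    by_cases h : M < K <;> simp [h] <;> omega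

lemma countP_range_stab {p : ℕ → Bool} {K K' : ℕ} (h : ∀ v, p v = true → v < K)
    (hKK : K ≤ K') : (List.range K').countP p = (List.range K).countP p := by
  have e : K' = K + (K' - K) := by omega
  rw [e, List.range_add, List.countP_append]
  have h0 : (List.map (fun x => K + x) (List.range (K' - K))).countP p = 0 := by
    rw [List.countP_eq_zero]
    intro a ha
    obtain ⟨x, _, rfl⟩ := List.mem_map.1 ha
    intro hp
    exact absurd (h _ hp) (by omega)
  omega

lemma countP_range_eq {p : ℕ → Bool} {K K' : ℕ} (hK : ∀ v, p v = true → v < K)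
    (hK' : ∀ v, p v = true → v < K') : (List.range K).countP p = (List.range K').countP p := by
  rcases le_total K K' with h | h
  · rw [countP_range_stab hK h]
  · rw [countP_range_stab hK' h]

lemma reindex_odd (p : ℕ → Bool) : ∀ m,
    (List.range (2 * m)).countP (fun v => decide (Odd v) && p v)
      = (List.range m).countP (fun i => p (2 * i + 1)) := by
  intro m
  induction m with
  | zero => simp
  | succ m ih =>
    have e1 : List.range (2 * (m + 1)) = List.range (2 * m) ++ [2 * m, 2 * m + 1] := by
      rw [show 2 * (m + 1) = 2 * m + 2 by omega, List.range_add]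
      norm_num [List.range_succ]
    rw [e1, List.countP_append, ih, List.range_succ, List.countP_append]
    have h1 : ¬ Odd (2 * m) := by rw [Nat.odd_iff]; omega
    have h2 : Odd (2 * m + 1) := by rw [Nat.odd_iff]; omega
    simp [List.countP_cons, h1, h2]

lemma countP_range_odd_uniq {c : ℕ} (hc : Odd c) : ∀ m, c < 2 * m →
    (List.range m).countP (fun i => decide (2 * i + 1 = c)) = 1 := by
  intro m
  induction m with
  | zero => omega
  | succ m ih =>
    intro hcm
    rw [List.range_succ, List.countP_append]
    by_cases h : 2 * m + 1 = c
    · have h0 : (List.range m).countP (fun i => decide (2 * i + 1 = c)) = 0 := by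
        rw [List.countP_eq_zero]
        intro i hi; simp at hi ⊢; omega
      simp [h0, h]
    · have hlt : c < 2 * m := by
        rcases hc with ⟨k, hk⟩; omega
      simp [ih hlt, h]

lemma sum_parity (l : List ℕ) : l.sum % 2 = (l.countP (fun x => decide (Odd x))) % 2 := by
  induction l with
  | nil => simp
  | cons x t ih =>
    simp only [List.sum_cons, List.countP_cons]
    rcases Nat.even_or_odd x with h | h
    · have h2 : ¬ Odd x := by simp [Nat.odd_iff]; rw [Nat.even_iff] at h; omega
      simp [h2]
      rw [Nat.even_iff] at h
      omega
    · have hx := h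
      rw [Nat.odd_iff] at h
      simp [hx]
      omega

lemma lemeven : ∀ N (l : List ℕ), l.length ≤ N → List.Pairwise (· ≥ ·) l →
    (∀ v, Even v → Even (l.count v)) → ∀ p : ℕ → Bool, (∀ x ∈ l, p x = true → Even x) →
    Even (l.countP p) := by
  intro N
  induction N with
  | zero =>
    intro l hl _ _ p _
    have : l = [] := List.length_eq_zero_iff.1 (by omega)
    subst this; simp
  | succ N ih =>
    intro l hl hs hB p hp
    cases l with
    | nil => simp
    | cons x t =>
      rcases Nat.even_or_odd x with hx | hx
      · -- even head: second elt equals x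
        have hcount : Even ((x :: t).count x) := hB x hx
        rw [List.count_cons_self] at hcount
        have hodd : ¬ Even (t.count x) := by
          rcases hcount with ⟨k, hk⟩
          intro ⟨j, hj⟩; omega
        have hmem : x ∈ t := by
          by_contra hm
          rw [List.count_eq_zero_of_not_mem hm] at hodd
          exact hodd (by simp)
        obtain ⟨t', rfl⟩ := headx hs hmem
        simp only [List.countP_cons]
        have ht' : Even (t'.countP p) := by
          apply ih t' (by simp at hl; omega) (List.pairwise_cons.1 (List.pairwise_cons.1 hs).2).2
            _ p (fun y hy hpy => hp y (by simp [hy]) hpy)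
          intro v hv
          have hbv := hB v hv
          rw [List.count_cons, List.count_cons] at hbv
          rcases hbv with ⟨k, hk⟩
          by_cases hvx : x = v
          · simp [hvx] at hk ⊢
            exact ⟨k - 1, by omega⟩
          · simp [hvx] at hk ⊢
            exact ⟨k, by omega⟩
        rcases ht' with ⟨k, hk⟩
        by_cases hpx : p x = true <;> simp [hpx]
        · exact ⟨k + 1, by omega⟩
        · exact ⟨k, hk⟩
      · -- odd head
        have hpx : ¬ p x = true := fun h => by
          have := hp x (by simp) h; rw [Nat.even_iff] at this; rw [Nat.odd_iff] at hx; omega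
        simp only [List.countP_cons, hpx]
        simp
        apply ih t (by simp at hl; omega) (List.pairwise_cons.1 hs).2 _ p
          (fun y hy hpy => hp y (by simp [hy]) hpy)
        intro v hv
        have hbv := hB v hv
        rw [List.count_cons] at hbv
        have hvx : ¬ x = v := fun h => by
          subst h; rw [Nat.even_iff] at hv; rw [Nat.odd_iff] at hx; omega
        simpa [hvx] using hbv


lemma colLen_cnt (l : List ℕ) (j : ℕ) : colLen l j = cnt l j := rfl

lemma le_foldr_max (l : List ℕ) : ∀ x ∈ l, x ≤ l.foldr max 0 := by
  induction l with
  | nil => simp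
  | cons a t ih =>
    intro x hx
    simp only [List.foldr_cons]
    rcases List.mem_cons.1 hx with rfl | hx
    · exact le_max_left _ _
    · exact le_trans (ih x hx) (le_max_right _ _)

lemma getD_mem_or (l : List ℕ) (r : ℕ) : l.getD r 0 ∈ l ∨ l.getD r 0 = 0 := by
  by_cases h : r < l.length
  · left
    rw [List.getD_eq_getElem l 0 h]
    exact List.getElem_mem h
  · right
    exact List.getD_eq_default l 0 (by omega)

lemma getD_le_max (l : List ℕ) (r : ℕ) : l.getD r 0 ≤ l.foldr max 0 := by
  rcases getD_mem_or l r with h | h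
  · exact le_foldr_max l _ h
  · omega

lemma getD_append_zero (c : List ℕ) : ∀ j, (c ++ [0]).getD j 0 = c.getD j 0 := by
  induction c with
  | nil => intro j; cases j <;> simp
  | cons a t ih =>
    intro j
    cases j with
    | zero => rfl
    | succ n => rw [List.cons_append, List.getD_cons_succ, List.getD_cons_succ]; exact ih n

lemma getD_map_range (M : ℕ) (f : ℕ → ℕ) (j : ℕ) :
    ((List.range M).map f).getD j 0 = if j < M then f j else 0 := by
  rw [List.getD_eq_getElem?_getD, List.getElem?_map]
  by_cases h : j < M
  · rw [List.getElem?_range h]; simp [h]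
  · rw [List.getElem?_eq_none (by simpa using Nat.le_of_not_lt h)]; simp [h]

lemma cnt_zero_of_gt_max (l : List ℕ) {j : ℕ} (h : l.foldr max 0 < j) : cnt l j = 0 := by
  simp only [cnt]
  rw [List.countP_eq_zero]
  intro x hx
  simp only [decide_eq_true_eq, Nat.not_le]
  exact lt_of_le_of_lt (le_foldr_max l x hx) h

lemma tgetD (l : List ℕ) (j : ℕ) :
    (padToEven (transposeList l)).getD j 0 = cnt l (j + 1) := by
  have base : (transposeList l).getD j 0 = cnt l (j + 1) := by
    unfold transposeList
    rw [getD_map_range]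
    by_cases h : j < l.foldr max 0
    · simp [h, colLen_cnt]
    · rw [if_neg h, eq_comm]
      exact cnt_zero_of_gt_max l (by omega)
  unfold padToEven
  split
  · exact base
  · rw [getD_append_zero]; exact base

lemma sorted_transpose (l : List ℕ) : List.Pairwise (· ≥ ·) (transposeList l) := by
  unfold transposeList
  rw [List.pairwise_map]
  exact List.pairwise_lt_range.imp (fun h => cnt_anti l (by omega))

lemma sorted_pad {X : List ℕ} (hs : List.Pairwise (· ≥ ·) X) :
    List.Pairwise (· ≥ ·) (padToEven X) := by
  unfold padToEven
  split
  · exact hs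
  · rw [List.pairwise_append]
    exact ⟨hs, by simp, by simp⟩

lemma even_pad (X : List ℕ) : Even (padToEven X).length := by
  unfold padToEven
  split
  · assumption
  · rw [List.length_append]
    rcases Nat.even_or_odd X.length with h | h
    · simp_all
    · rcases h with ⟨k, hk⟩; exact ⟨k + 1, by simp; omega⟩

lemma tkey {l : List ℕ} (hs : List.Pairwise (· ≥ ·) l) {a : ℕ} (ha : 1 ≤ a) :
    cnt (transposeList l) a = l.getD (a - 1) 0 := by
  unfold cnt transposeList
  rw [List.countP_map]
  have hpt : ((fun x => decide (a ≤ x)) ∘ fun j => colLen l (j + 1))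
      = fun j => decide (j < l.getD (a - 1) 0) := by
    funext j
    simp only [Function.comp, decide_eq_decide, colLen_cnt]
    have h := sorted_cnt hs (v := j + 1) (by omega) (a - 1)
    rw [show a - 1 + 1 = a by omega] at h
    show decide (a ≤ cnt l (j + 1)) = decide (j < l.getD (a - 1) 0)
    rw [decide_eq_decide]
    omega
  rw [hpt, countP_range_lt]
  exact Nat.min_eq_right (getD_le_max l (a - 1))

lemma tcount {l : List ℕ} (hs : List.Pairwise (· ≥ ·) l) {a : ℕ} (ha : 1 ≤ a) :
    l.getD (a - 1) 0 = l.getD a 0 + (transposeList l).count a := by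
  have h1 := cnt_split (transposeList l) a
  rw [tkey hs ha, tkey hs (by omega : 1 ≤ a + 1)] at h1
  rw [show a + 1 - 1 = a by omega] at h1
  omega

lemma maxodd {l : List ℕ} (hs : List.Pairwise (· ≥ ·) l) (hsum : Odd l.sum)
    (hB : ∀ v, Even v → Even (l.count v))
    (hT : ∀ v, Even v → Even ((transposeList l).count v)) :
    Odd (l.headD 0) := by
  by_contra hodd
  have heven : Even (l.headD 0) := Nat.not_odd_iff_even.1 hodd
  have hlne : l ≠ [] := by
    intro h; rw [h] at hsum; simp [Nat.odd_iff] at hsum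
  -- the odd entries
  have hone : 0 < (l.filter (fun x => decide (Odd x))).length := by
    rw [← List.countP_eq_length_filter]
    have := sum_parity l
    rw [Nat.odd_iff] at hsum
    omega
  obtain ⟨w, odds', hwodds⟩ := List.exists_cons_of_ne_nil (List.length_pos_iff.1 hone)
  have hwmem : w ∈ l.filter (fun x => decide (Odd x)) := by rw [hwodds]; simp
  have hwl : w ∈ l := (List.mem_filter.1 hwmem).1
  have hwoddv : Odd w := by have := (List.mem_filter.1 hwmem).2; simpa using this
  have hwmax : ∀ x ∈ l, Odd x → x ≤ w := by
    intro x hx hox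
    have hxmem : x ∈ l.filter (fun x => decide (Odd x)) := List.mem_filter.2 ⟨hx, by simpa⟩
    rw [hwodds] at hxmem
    exact sorted_head_ge (by rw [← hwodds]; exact hs.filter _) x hxmem
  have hw1 : 0 < w := by rcases hwoddv with ⟨k, hk⟩; omega
  set r := cnt l (w + 1) with hr
  have hreven : Even r := by
    apply lemeven l.length l (le_refl _) hs hB
    intro x hx hpx
    simp only [decide_eq_true_eq] at hpx
    rcases Nat.even_or_odd x with h | h
    · exact h
    · exact absurd (hwmax x hx h) (by omega)
  have hhead : l.headD 0 ∈ l := by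
    cases l with
    | nil => exact absurd rfl hlne
    | cons a t => simp
  have hheadw : w ≤ l.headD 0 := by
    cases l with
    | nil => exact absurd rfl hlne
    | cons a t => exact sorted_head_ge hs w hwl
  have hneq : l.headD 0 ≠ w := by
    intro h; rw [h] at heven; rw [Nat.even_iff] at heven; rw [Nat.odd_iff] at hwoddv; omega
  have hr1 : 0 < r := by
    rw [hr]; simp only [cnt]
    apply List.countP_pos_iff.2
    exact ⟨l.headD 0, hhead, by simp only [decide_eq_true_eq]; omega⟩
  have hA : w + 1 ≤ l.getD (r - 1) 0 := by
    rw [sorted_cnt hs (by omega : 0 < w + 1) (r - 1), ← hr]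
    omega
  have hBe : w ≤ l.getD r 0 := by
    rw [sorted_cnt hs hw1 r]
    have h1 := cnt_split l w
    rw [← hr] at h1
    have h2 : 0 < l.count w := List.count_pos_iff.2 hwl
    omega
  have hCe : ¬ (w + 1 ≤ l.getD r 0) := by
    rw [sorted_cnt hs (by omega : 0 < w + 1) r, ← hr]
    omega
  have hgr : l.getD r 0 = w := by omega
  have hmem2 : l.getD (r - 1) 0 ∈ l := by
    rcases getD_mem_or l (r - 1) with h | h
    · exact h
    · omega
  have hev2 : Even (l.getD (r - 1) 0) := by
    rcases Nat.even_or_odd (l.getD (r - 1) 0) with h | h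
    · exact h
    · exact absurd (hwmax _ hmem2 h) (by omega)
  have htc := tcount hs (by omega : 1 ≤ r)
  rw [hgr] at htc
  have hct : Even ((transposeList l).count r) := hT r hreven
  rw [Nat.even_iff] at hev2 hct
  rw [Nat.odd_iff] at hwoddv
  omega

def avP (l : List ℕ) (v : ℕ) : Bool := decide (Odd v ∧ v ∈ l ∧ Odd (cnt l v))

def Aval (K : ℕ) (l : List ℕ) : ℕ := (List.range K).countP (avP l)

lemma countP_range_eq_val (a : ℕ) : ∀ K,
    (List.range K).countP (fun v => decide (v = a)) = if a < K then 1 else 0 := by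
  intro K
  induction K with
  | zero => simp
  | succ K ih =>
    rw [List.range_succ, List.countP_append, ih]
    simp only [List.countP_cons, List.countP_nil, decide_eq_true_eq]
    by_cases h : K = a
    · rw [if_pos h, if_pos (by omega : a < K + 1), if_neg (by omega : ¬ a < K)]
    · rw [if_neg h]
      by_cases h3 : a < K
      · rw [if_pos h3, if_pos (by omega : a < K + 1)]
      · rw [if_neg h3, if_neg (by omega : ¬ a < K + 1)]

lemma countP_split_one {p q : ℕ → Bool} {a : ℕ} (hpa : p a = true) (hqa : q a = false)
    (hpq : ∀ v, v ≠ a → p v = q v) : ∀ K, a < K →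
    (List.range K).countP p = (List.range K).countP q + 1 := by
  intro K
  induction K with
  | zero => omega
  | succ K ih =>
    intro haK
    rw [List.range_succ, List.countP_append, List.countP_append]
    by_cases h : K = a
    · subst h
      have hc : (List.range K).countP p = (List.range K).countP q := by
        apply List.countP_congr
        intro v hv
        rw [hpq v (by simp at hv; omega)]
      simp [hc, hpa, hqa]
    · have h2 : (List.countP p [K]) = (List.countP q [K]) := by
        simp only [List.countP_cons, List.countP_nil]
        rw [hpq K h]
      rw [h2, ih (by omega)]
      omega

lemma second_eq {a b : ℕ} {t : List ℕ} (hs : List.Pairwise (· ≥ ·) (a :: b :: t))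
    (h : a ∈ b :: t) : b = a :=
  Nat.le_antisymm ((List.pairwise_cons.1 hs).1 b (by simp))
    (sorted_head_ge (List.pairwise_cons.1 hs).2 a h)

lemma cnt_eq_zero_of_le_notmem {t : List ℕ} {v : ℕ} (ht : ∀ x ∈ t, x ≤ v) (hm : v ∉ t) :
    cnt t v = 0 := by
  simp only [cnt]
  rw [List.countP_eq_zero]
  intro x hx
  simp only [decide_eq_true_eq]
  intro hvx
  exact hm (by rwa [Nat.le_antisymm (ht x hx) hvx] at hx)

lemma cnt_eq_zero_of_lt {t : List ℕ} {b v : ℕ} (ht : ∀ x ∈ t, x ≤ b) (hv : b < v) :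
    cnt t v = 0 := by
  simp only [cnt]
  rw [List.countP_eq_zero]
  intro x hx
  simp only [decide_eq_true_eq, Nat.not_le]
  exact lt_of_le_of_lt (ht x hx) hv

lemma count_cons' (x v : ℕ) (t : List ℕ) :
    (x :: t).count v = t.count v + (if x = v then 1 else 0) := by
  rw [List.count_cons]; simp [beq_iff_eq]

lemma F1 : ∀ N (l : List ℕ) (K : ℕ), l.length ≤ N → List.Pairwise (· ≥ ·) l → Odd l.sum →
    (∀ v, Even v → Even (l.count v)) → l.sum < K →
    (redg (fun _ => true) (l.filter (fun x => decide (Odd x)))).length + 1 = 2 * Aval K l := by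
  intro N
  induction N with
  | zero =>
    intro l K hl _ hsum _ _
    have : l = [] := List.length_eq_zero_iff.1 (by omega)
    subst this
    simp [Nat.odd_iff] at hsum
  | succ N ih =>
    intro l K hl hs hsum hB hK
    cases l with
    | nil => simp [Nat.odd_iff] at hsum
    | cons a t =>
    cases t with
    | nil =>
      -- singleton
      have ha : Odd a := by simpa using hsum
      have hfil : List.filter (fun x => decide (Odd x)) [a] = [a] := by simp [ha]
      rw [hfil, redg_one]
      have hpt : avP [a] = fun v => decide (v = a) := by
        funext v
        unfold avP
        rw [decide_eq_decide]
        constructor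
        · rintro ⟨_, hm, _⟩; simpa using hm
        · intro hv
          subst hv
          refine ⟨ha, by simp, ?_⟩
          have h1 : cnt [v] v = 1 := by simp [cnt]
          rw [h1]; exact ⟨0, rfl⟩
      unfold Aval
      rw [hpt, countP_range_eq_val]
      have haK : a < K := by simp at hK; omega
      simp [haK]
    | cons b t =>
    have hba : b ≤ a := (List.pairwise_cons.1 hs).1 b (by simp)
    have hst : List.Pairwise (· ≥ ·) (b :: t) := (List.pairwise_cons.1 hs).2
    have htb : ∀ x ∈ t, x ≤ b := (List.pairwise_cons.1 hst).1
    have hsum2 : a + (b + t.sum) = (a :: b :: t).sum := by simp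
    by_cases hae : Even a
    · -- Case A : even head, so b = a
      have hca : Even ((a :: b :: t).count a) := hB a hae
      rw [List.count_cons_self] at hca
      have hmem : a ∈ b :: t := by
        by_contra hm
        rw [List.count_eq_zero_of_not_mem hm] at hca
        simp [Nat.even_iff] at hca
      have hbeq : b = a := second_eq hs hmem
      subst hbeq
      -- l = b :: b :: t
      have hfil : (b :: b :: t).filter (fun x => decide (Odd x))
          = t.filter (fun x => decide (Odd x)) := by
        have : ¬ Odd b := by rw [Nat.odd_iff]; rw [Nat.even_iff] at hae; omega
        simp [this]
      have hsumt : Odd t.sum := by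
        rw [Nat.odd_iff] at hsum ⊢
        rw [Nat.even_iff] at hae
        simp at hsum
        omega
      have hBt : ∀ v, Even v → Even (t.count v) := by
        intro v hv
        have h2 := hB v hv
        rw [count_cons', count_cons'] at h2
        rw [Nat.even_iff] at h2 ⊢
        by_cases hvb : b = v
        · rw [if_pos hvb] at h2; omega
        · rw [if_neg hvb] at h2; omega
      have hpt : ∀ v, avP (b :: b :: t) v = avP t v := by
        intro v
        unfold avP
        rw [decide_eq_decide]
        by_cases hov : Odd v
        · have hvb : ¬ v = b := by
            intro h; subst h; rw [Nat.odd_iff] at hov; rw [Nat.even_iff] at hae; omega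
          rw [cnt_cons, cnt_cons]
          simp only [List.mem_cons]
          by_cases hle : v ≤ b <;>
            simp [hle, hvb, hov, Nat.odd_iff] <;> omega
        · simp [hov]
      have hAv : Aval K (b :: b :: t) = Aval K t := by
        unfold Aval
        exact List.countP_congr (fun v _ => by rw [hpt v])
      rw [hfil, hAv]
      exact ih t K (by simp at hl; omega) (List.pairwise_cons.1 hst).2 hsumt hBt
        (by simp at hK; omega)
    · -- a odd
      have hao : Odd a := Nat.odd_iff.2 (by rw [Nat.even_iff] at hae; omega)
      by_cases hbe : Even b
      · -- Case B1 : t = b :: t', recurse on a :: t'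
        have hab : ¬ b = a := by
          intro h
          rw [Nat.even_iff] at hbe
          rw [Nat.odd_iff] at hao
          omega
        have hcb := hB b hbe
        rw [count_cons', if_neg (fun h => hab h.symm), List.count_cons_self] at hcb
        have hmem : b ∈ t := by
          by_contra hm
          rw [List.count_eq_zero_of_not_mem hm] at hcb
          simp [Nat.even_iff] at hcb
        obtain ⟨t', rfl⟩ := headx hst hmem
        have htb' : ∀ x ∈ t', x ≤ b := fun x hx => htb x (by simp [hx])
        have hst' : List.Pairwise (· ≥ ·) (a :: t') := by
          rw [List.pairwise_cons]
          refine ⟨fun y hy => le_trans (htb' y hy) hba, (List.pairwise_cons.1 (List.pairwise_cons.1 hst).2).2⟩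
        have hsum' : Odd (a :: t').sum := by
          rw [Nat.odd_iff] at hsum ⊢
          rw [Nat.even_iff] at hbe
          simp at hsum ⊢
          omega
        have hB' : ∀ v, Even v → Even ((a :: t').count v) := by
          intro v hv
          have h2 := hB v hv
          rw [count_cons', count_cons', count_cons'] at h2
          rw [count_cons']
          rw [Nat.even_iff] at h2 ⊢
          by_cases hv1 : a = v
          · by_cases hv2 : b = v
            · rw [if_pos hv2, if_pos hv1] at h2; rw [if_pos hv1]; omega
            · rw [if_neg hv2, if_pos hv1] at h2; rw [if_pos hv1]; omega
          · by_cases hv2 : b = v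
            · rw [if_pos hv2, if_neg hv1] at h2; rw [if_neg hv1]; omega
            · rw [if_neg hv2, if_neg hv1] at h2; rw [if_neg hv1]; omega
        have hfil : (a :: b :: b :: t').filter (fun x => decide (Odd x))
            = (a :: t').filter (fun x => decide (Odd x)) := by
          have hnb : ¬ Odd b := by rw [Nat.odd_iff]; rw [Nat.even_iff] at hbe; omega
          simp [hao, hnb]
        have hpt : ∀ v, avP (a :: b :: b :: t') v = avP (a :: t') v := by
          intro v
          unfold avP
          rw [decide_eq_decide]
          by_cases hov : Odd v
          · have hvb : ¬ v = b := by
              intro h; subst h; rw [Nat.odd_iff] at hov; rw [Nat.even_iff] at hbe; omega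
            rw [cnt_cons, cnt_cons, cnt_cons, cnt_cons]
            simp only [List.mem_cons]
            by_cases hle1 : v ≤ a <;> by_cases hle2 : v ≤ b <;>
              simp [hle1, hle2, hvb, hov, Nat.odd_iff] <;> omega
          · simp [hov]
        have hAv : Aval K (a :: b :: b :: t') = Aval K (a :: t') := by
          unfold Aval
          exact List.countP_congr (fun v _ => by rw [hpt v])
        rw [hfil, hAv]
        exact ih (a :: t') K (by simp at hl ⊢; omega) hst' hsum' hB' (by simp at hK ⊢; omega)
      · -- b odd
        have hbo : Odd b := Nat.odd_iff.2 (by rw [Nat.even_iff] at hbe; omega)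
        by_cases hab : b = a
        · -- Case B2 : equal odd pair
          subst hab
          have hfil : (b :: b :: t).filter (fun x => decide (Odd x))
              = b :: b :: t.filter (fun x => decide (Odd x)) := by
            simp [hbo]
          rw [hfil, redg_cons, if_pos ⟨rfl, rfl⟩]
          have hsumt : Odd t.sum := by
            rw [Nat.odd_iff] at hsum ⊢
            rw [Nat.odd_iff] at hbo
            simp at hsum
            omega
          have hBt : ∀ v, Even v → Even (t.count v) := by
            intro v hv
            have h2 := hB v hv
            rw [count_cons', count_cons'] at h2
            have hvb : ¬ b = v := by
              intro h; rw [← h] at hv; rw [Nat.even_iff] at hv; rw [Nat.odd_iff] at hbo; omega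
            rw [if_neg hvb] at h2
            simpa using h2
          have hpt : ∀ v, avP (b :: b :: t) v = avP t v := by
            intro v
            unfold avP
            rw [decide_eq_decide]
            by_cases hov : Odd v
            · rw [cnt_cons, cnt_cons]
              simp only [List.mem_cons]
              by_cases hvb : v = b
              · subst hvb
                simp only [Nat.le_refl, if_pos]
                by_cases hvt : v ∈ t
                · simp [hvt, hov, Nat.odd_iff]; omega
                · have h0 : cnt t v = 0 := cnt_eq_zero_of_le_notmem htb hvt
                  simp [hvt, hov, h0, Nat.odd_iff]
              · by_cases hle : v ≤ b <;> simp [hle, hvb, hov, Nat.odd_iff] <;> omega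
            · simp [hov]
          have hAv : Aval K (b :: b :: t) = Aval K t := by
            unfold Aval
            exact List.countP_congr (fun v _ => by rw [hpt v])
          rw [hAv]
          exact ih t K (by simp at hl; omega) (List.pairwise_cons.1 hst).2 hsumt hBt
            (by simp at hK; omega)
        · -- Case B3 : unequal odd pair
          have hblt : b < a := by omega
          have hfil : (a :: b :: t).filter (fun x => decide (Odd x))
              = a :: b :: t.filter (fun x => decide (Odd x)) := by
            simp [hao, hbo]
          rw [hfil, redg_cons, if_neg (by intro h; exact hab h.1.symm)]
          have hsumt : Odd t.sum := by
            rw [Nat.odd_iff] at hsum hao hbo ⊢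
            simp at hsum
            omega
          have hBt : ∀ v, Even v → Even (t.count v) := by
            intro v hv
            have h2 := hB v hv
            rw [count_cons', count_cons'] at h2
            have hv1 : ¬ a = v := by
              intro h; rw [← h] at hv; rw [Nat.even_iff] at hv; rw [Nat.odd_iff] at hao; omega
            have hv2 : ¬ b = v := by
              intro h; rw [← h] at hv; rw [Nat.even_iff] at hv; rw [Nat.odd_iff] at hbo; omega
            rw [if_neg hv2, if_neg hv1] at h2
            simpa using h2
          have hpa : avP (a :: b :: t) a = true := by
            unfold avP
            simp only [decide_eq_true_eq]
            refine ⟨hao, by simp, ?_⟩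
            rw [cnt_cons, cnt_cons, if_pos (le_refl a), if_neg (by omega),
              cnt_eq_zero_of_lt htb (by omega)]
            exact ⟨0, rfl⟩
          have hqa : avP t a = false := by
            unfold avP
            simp only [decide_eq_false_iff_not]
            rintro ⟨_, hm, _⟩
            exact absurd (htb a hm) (by omega)
          have hpq : ∀ v, v ≠ a → avP (a :: b :: t) v = avP t v := by
            intro v hva
            unfold avP
            rw [decide_eq_decide]
            by_cases hov : Odd v
            · rw [cnt_cons, cnt_cons]
              simp only [List.mem_cons]
              by_cases hvb : v = b
              · subst hvb
                simp only [if_pos (le_refl v), if_pos (le_of_lt hblt)]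
                by_cases hvt : v ∈ t
                · simp [hvt, hov, hva, Nat.odd_iff]; omega
                · have h0 : cnt t v = 0 := cnt_eq_zero_of_le_notmem htb hvt
                  simp [hvt, hov, hva, h0, Nat.odd_iff]
              · have hmemiff : (v = a ∨ v = b ∨ v ∈ t) ↔ v ∈ t := by
                  constructor
                  · rintro (h | h | h)
                    · exact absurd h hva
                    · exact absurd h hvb
                    · exact h
                  · exact fun h => Or.inr (Or.inr h)
                by_cases hvt : v ∈ t
                · have hle2 : v ≤ b := htb v hvt
                  have hle1 : v ≤ a := le_trans hle2 hba
                  rw [if_pos hle1, if_pos hle2]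
                  constructor
                  · rintro ⟨h1, _, h3⟩
                    refine ⟨h1, hvt, ?_⟩
                    rw [Nat.odd_iff] at h3 ⊢; omega
                  · rintro ⟨h1, _, h3⟩
                    refine ⟨h1, hmemiff.2 hvt, ?_⟩
                    rw [Nat.odd_iff] at h3 ⊢; omega
                · constructor
                  · rintro ⟨h1, h2, h3⟩
                    exact absurd (hmemiff.1 (by simpa using h2)) hvt
                  · rintro ⟨h1, h2, h3⟩
                    exact absurd h2 hvt
            · simp [hov]
          have haK : a < K := by simp at hK; omega
          unfold Aval
          rw [countP_split_one hpa hqa hpq K haK]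
          have := ih t K (by simp at hl; omega) (List.pairwise_cons.1 hst).2 hsumt hBt
            (by simp at hK; omega)
          unfold Aval at this
          simp only [List.length_cons]
          omega

def cc (p : ℕ → ℕ → Bool) : List ℕ → ℕ
  | a :: b :: r => (if p a b then 1 else 0) + cc p r
  | _ => 0

lemma cc_nil (p : ℕ → ℕ → Bool) : cc p [] = 0 := rfl
lemma cc_one (p : ℕ → ℕ → Bool) (a : ℕ) : cc p [a] = 0 := rfl
lemma cc_cons (p : ℕ → ℕ → Bool) (a b : ℕ) (r : List ℕ) :
    cc p (a :: b :: r) = (if p a b then 1 else 0) + cc p r := rfl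

def pA : ℕ → ℕ → Bool := fun a b => decide (b < a ∧ Odd a)
def pB : ℕ → ℕ → Bool := fun a b => decide (b < a ∧ (Odd b ∨ b = 0))
def pZ : ℕ → ℕ → Bool := fun a b => decide (b = 0 ∧ 0 < a)

def nf2 : List ℕ → List ℕ
  | [] => []
  | x :: t => x :: redg (fun a => decide (Even a)) t

lemma SL : ∀ N (w : List ℕ) (b : ℕ), w.length ≤ N → List.Pairwise (· ≥ ·) w →
    Odd (w.count b) → (∀ x ∈ w, x ≤ b) → ∃ t, redg (fun _ => true) w = b :: t := by
  intro N
  induction N with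
  | zero =>
    intro w b hl _ hc _
    have : w = [] := List.length_eq_zero_iff.1 (by omega)
    subst this
    simp [Nat.odd_iff] at hc
  | succ N ih =>
    intro w b hl hs hc hub
    cases w with
    | nil => simp [Nat.odd_iff] at hc
    | cons c w' =>
      have hcb : c = b := by
        have hbmem : b ∈ c :: w' := by
          by_contra hm
          rw [List.count_eq_zero_of_not_mem hm] at hc
          simp [Nat.odd_iff] at hc
        exact Nat.le_antisymm (hub c (by simp)) (sorted_head_ge hs b hbmem)
      subst hcb
      cases w' with
      | nil => exact ⟨[], redg_one _ _⟩
      | cons d w'' =>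
        by_cases hd : c = d
        · subst hd
          rw [redg_cons, if_pos ⟨rfl, rfl⟩]
          apply ih w'' c (by simp at hl; omega)
            (List.pairwise_cons.1 (List.pairwise_cons.1 hs).2).2
          · have := hc
            rw [count_cons', count_cons', if_pos rfl] at this
            rw [Nat.odd_iff] at this ⊢
            omega
          · intro x hx
            exact hub x (by simp [hx])
        · rw [redg_cons, if_neg (by rintro ⟨h, _⟩; exact hd h)]
          exact ⟨d :: redg (fun _ => true) w'', rfl⟩

lemma SL0 : ∀ N (w : List ℕ), w.length ≤ N → (∀ x ∈ w, x = 0) → Even w.length →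
    redg (fun _ => true) w = [] := by
  intro N
  induction N with
  | zero =>
    intro w hl _ _
    have : w = [] := List.length_eq_zero_iff.1 (by omega)
    subst this; rfl
  | succ N ih =>
    intro w hl hz he
    cases w with
    | nil => rfl
    | cons c w' =>
      cases w' with
      | nil => simp [Nat.even_iff] at he
      | cons d w'' =>
        have hc : c = 0 := hz c (by simp)
        have hd : d = 0 := hz d (by simp)
        subst hc; subst hd
        rw [redg_cons, if_pos ⟨rfl, rfl⟩]
        apply ih w'' (by simp at hl; omega) (fun x hx => hz x (by simp [hx]))
        rw [Nat.even_iff] at he ⊢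
        simp at he
        omega

lemma rednil_cc : ∀ N (w : List ℕ), w.length ≤ N → redg (fun _ => true) w = [] →
    cc pB w = 0 := by
  intro N
  induction N with
  | zero =>
    intro w hl _
    have : w = [] := List.length_eq_zero_iff.1 (by omega)
    subst this; rfl
  | succ N ih =>
    intro w hl hr
    cases w with
    | nil => rfl
    | cons c w' =>
      cases w' with
      | nil => rw [redg_one] at hr; exact absurd hr (by simp)
      | cons d w'' =>
        by_cases hd : c = d
        · subst hd
          rw [redg_cons, if_pos ⟨rfl, rfl⟩] at hr
          rw [cc_cons, ih w'' (by simp at hl; omega) hr]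
          simp [pB]
        · rw [redg_cons, if_neg (by rintro ⟨h, _⟩; exact hd h)] at hr
          exact absurd hr (by simp)

lemma F2 : ∀ N (C : List ℕ), C.length ≤ N → List.Pairwise (· ≥ ·) C → Even C.length →
    (∀ v, Even v → 0 < v → Odd (C.count v) → C.head? = some v) →
    (nf2 (redg (fun _ => true) C)).length = 2 * cc pB C := by
  intro N
  induction N with
  | zero =>
    intro C hl _ _ _
    have : C = [] := List.length_eq_zero_iff.1 (by omega)
    subst this; rfl
  | succ N ih =>
    intro C hl hs he hinv
    cases C with
    | nil => rfl
    | cons a C1 =>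
    cases C1 with
    | nil => simp [Nat.even_iff] at he
    | cons b C' =>
    have hba : b ≤ a := (List.pairwise_cons.1 hs).1 b (by simp)
    have hsbC : List.Pairwise (· ≥ ·) (b :: C') := (List.pairwise_cons.1 hs).2
    have hub : ∀ x ∈ C', x ≤ b := (List.pairwise_cons.1 hsbC).1
    have hsC' : List.Pairwise (· ≥ ·) C' := (List.pairwise_cons.1 hsbC).2
    have heC' : Even C'.length := by
      rw [Nat.even_iff] at he ⊢
      simp at he
      omega
    have hlC' : C'.length ≤ N := by simp at hl; omega
    by_cases hab : a = b
    · -- equal pair : delete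
      subst hab
      rw [redg_cons, if_pos ⟨rfl, rfl⟩]
      have hinv' : ∀ v, Even v → 0 < v → Odd (C'.count v) → C'.head? = some v := by
        intro v hv h0 hodd
        have hcv : Odd ((a :: a :: C').count v) := by
          rw [count_cons', count_cons']
          by_cases hav : a = v
          · rw [if_pos hav]
            rw [Nat.odd_iff] at hodd ⊢; omega
          · rw [if_neg hav]
            simpa using hodd
        have hhd := hinv v hv h0 hcv
        simp at hhd
        rw [← hhd] at hodd ⊢
        have hmem : a ∈ C' := by
          by_contra hm
          rw [List.count_eq_zero_of_not_mem hm] at hodd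
          simp [Nat.odd_iff] at hodd
        obtain ⟨t', rfl⟩ := headx hsbC hmem
        rfl
      rw [cc_cons]
      have hpB : pB a a = false := by simp [pB]
      rw [hpB, if_neg (by simp)]
      simpa using ih C' hlC' hsC' heC' hinv'
    · -- strict drop
      have hblt : b < a := lt_of_le_of_ne hba (fun h => hab h.symm)
      rw [redg_cons, if_neg (by rintro ⟨h, _⟩; exact hab h)]
      have hanotC' : a ∉ C' := fun h => absurd (hub a h) (by omega)
      -- INV transfer for C' (works whenever needed values distinct from a)
      by_cases hbev : Even b ∧ 0 < b
      · -- deletable stage-2 pair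
        obtain ⟨hbe, hb0⟩ := hbev
        have hcb : ¬ Odd ((a :: b :: C').count b) := by
          intro ho
          have := hinv b hbe hb0 ho
          simp at this
          exact hab this
        have hcb' : Odd (C'.count b) := by
          rw [count_cons', count_cons', if_pos rfl, if_neg (fun h => hab h)] at hcb
          rw [Nat.odd_iff] at hcb ⊢
          omega
        obtain ⟨t, ht⟩ := SL C'.length C' b le_rfl hsC' hcb' hub
        have hinv' : ∀ v, Even v → 0 < v → Odd (C'.count v) → C'.head? = some v := by
          intro v hv h0 hodd
          by_cases hvb : v = b
          · rw [hvb] at hodd ⊢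
            have hmem : b ∈ C' := by
              by_contra hm
              rw [List.count_eq_zero_of_not_mem hm] at hodd
              simp [Nat.odd_iff] at hodd
            obtain ⟨t', rfl⟩ := headx hsbC hmem
            rfl
          · by_cases hva : v = a
            · subst hva
              exfalso
              rw [List.count_eq_zero_of_not_mem hanotC'] at hodd
              simp [Nat.odd_iff] at hodd
            · exfalso
              have hcv : Odd ((a :: b :: C').count v) := by
                rw [count_cons', count_cons',
                  if_neg (show ¬ (b = v) from fun h => hvb h.symm),
                  if_neg (show ¬ (a = v) from fun h => hva h.symm)]
                simpa using hodd
              have := hinv v hv h0 hcv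
              simp at this
              exact hva this.symm
        have hIH := ih C' hlC' hsC' heC' hinv'
        rw [ht] at hIH ⊢
        -- LHS : nf2 (a :: b :: b :: t)
        show (a :: redg (fun a => decide (Even a)) (b :: b :: t)).length = _
        rw [redg_cons, if_pos ⟨rfl, by simpa using hbe⟩]
        -- hIH : (nf2 (b :: t)).length = 2 * cc pB C'
        have hIH2 : (redg (fun a => decide (Even a)) t).length + 1 = 2 * cc pB C' := by
          simpa [nf2] using hIH
        rw [cc_cons]
        have hpB : pB a b = false := by
          simp only [pB, decide_eq_false_iff_not]
          rintro ⟨_, h | h⟩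
          · rw [Nat.odd_iff] at h; rw [Nat.even_iff] at hbe; omega
          · omega
        rw [hpB, if_neg (by simp)]
        simp only [List.length_cons]
        omega
      · -- non-deletable : Odd b or b = 0
        have hodd0 : Odd b ∨ b = 0 := by
          rcases Nat.even_or_odd b with h | h
          · right
            by_contra h0
            exact hbev ⟨h, by omega⟩
          · left; exact h
        have hpB : pB a b = true := by
          simp only [pB, decide_eq_true_eq]
          exact ⟨hblt, hodd0⟩
        have hinv' : ∀ v, Even v → 0 < v → Odd (C'.count v) → C'.head? = some v := by
          intro v hv h0 hodd
          by_cases hva : v = a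
          · subst hva
            exfalso
            rw [List.count_eq_zero_of_not_mem hanotC'] at hodd
            simp [Nat.odd_iff] at hodd
          · have hvb : ¬ v = b := by
              intro h
              subst h
              rcases hodd0 with h | h
              · rw [Nat.odd_iff] at h; rw [Nat.even_iff] at hv; omega
              · omega
            exfalso
            have hcv : Odd ((a :: b :: C').count v) := by
              rw [count_cons', count_cons',
                if_neg (show ¬ (b = v) from fun h => hvb h.symm),
                if_neg (show ¬ (a = v) from fun h => hva h.symm)]
              simpa using hodd
            have := hinv v hv h0 hcv
            simp at this
            exact hva this.symm
        rcases hodd0 with hbo | hb0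
        · -- b odd
          cases hred : redg (fun _ => true) C' with
          | nil =>
            have hcc0 : cc pB C' = 0 := rednil_cc C'.length C' le_rfl hred
            rw [cc_cons, hpB, if_pos rfl, hcc0]
            rfl
          | cons x rest =>
            cases rest with
            | nil =>
              exfalso
              have := redg_length_mod (fun _ => true) C'
              rw [hred] at this
              rcases heC' with ⟨k, hk⟩
              simp at this
              omega
            | cons y rest' =>
              have hIH := ih C' hlC' hsC' heC' hinv'
              rw [hred] at hIH
              show (a :: redg (fun a => decide (Even a)) (b :: x :: y :: rest')).length = _
              rw [redg_cons, if_neg (by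
                rintro ⟨h1, h2⟩
                simp at h2
                rw [Nat.odd_iff] at hbo; rw [Nat.even_iff] at h2; omega)]
              have hIH2 : (redg (fun a => decide (Even a)) (y :: rest')).length + 1
                  = 2 * cc pB C' := by
                simpa [nf2] using hIH
              rw [cc_cons, hpB, if_pos rfl]
              simp only [List.length_cons]
              omega
        · -- b = 0 : everything after is zero
          subst hb0
          have hz : ∀ x ∈ C', x = 0 := fun x hx => by
            have := hub x hx; omega
          have hred : redg (fun _ => true) C' = [] := SL0 C'.length C' le_rfl hz heC'
          rw [hred]
          have hcc0 : cc pB C' = 0 := rednil_cc C'.length C' le_rfl hred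
          rw [cc_cons, hpB, if_pos rfl, hcc0]
          rfl

def plink : List ℕ → Prop
  | _ :: b :: r => (Even b ↔ Even (r.headD 0)) ∧ plink r
  | _ => True

lemma plink_nil : plink [] := trivial
lemma plink_one (a : ℕ) : plink [a] := trivial
lemma plink_cons (a b : ℕ) (r : List ℕ) :
    plink (a :: b :: r) ↔ (Even b ↔ Even (r.headD 0)) ∧ plink r := Iff.rfl

lemma getD_zero_headD (r : List ℕ) : r.getD 0 0 = r.headD 0 := by cases r <;> rfl

lemma indic (a b : ℕ) (hba : b ≤ a) :
    (if pA a b = true then 1 else 0) + (if pZ a b = true then 1 else 0)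
      + (if Odd b then 1 else 0)
    = (if pB a b = true then 1 else 0) + (if Odd a then 1 else 0) := by
  by_cases hlt : b < a
  · by_cases hz : b = 0
    · subst hz
      have hno : ¬ Odd 0 := by rw [Nat.odd_iff]; omega
      by_cases hoa : Odd a <;>
        simp [pA, pB, pZ, hlt, hoa, hno, (by omega : 0 < a)]
    · by_cases hob : Odd b
      · by_cases hoa : Odd a <;> simp [pA, pB, pZ, hlt, hz, hob, hoa]
      · by_cases hoa : Odd a <;> simp [pA, pB, pZ, hlt, hz, hob, hoa]
  · have heq : b = a := by omega
    subst heq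
    simp [pA, pB, pZ, hlt]

lemma claim1 : ∀ N (C : List ℕ), C.length ≤ N → List.Pairwise (· ≥ ·) C → Even C.length →
    plink C → cc pA C + cc pZ C = cc pB C + (if Odd (C.headD 0) then 1 else 0) := by
  intro N
  induction N with
  | zero =>
    intro C hl _ _ _
    have : C = [] := List.length_eq_zero_iff.1 (by omega)
    subst this
    have hno : ¬ Odd 0 := by rw [Nat.odd_iff]; omega
    simp [cc_nil, List.headD_nil, hno]
  | succ N ih =>
    intro C hl hs he hpl
    cases C with
    | nil =>
      have hno : ¬ Odd 0 := by rw [Nat.odd_iff]; omega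
      simp [cc_nil, List.headD_nil, hno]
    | cons a C1 =>
    cases C1 with
    | nil =>
      rw [Nat.even_iff] at he
      simp at he
    | cons b r =>
      obtain ⟨h1, h2⟩ := (plink_cons a b r).1 hpl
      have hba : b ≤ a := (List.pairwise_cons.1 hs).1 b (by simp)
      have her : Even r.length := by
        rw [Nat.even_iff] at he ⊢
        simp at he
        omega
      have hIH := ih r (by simp at hl; omega)
        (List.pairwise_cons.1 (List.pairwise_cons.1 hs).2).2 her h2
      have hbend : (if Odd (r.headD 0) then 1 else 0) = (if Odd b then 1 else 0) := by
        rw [Nat.even_iff, Nat.even_iff] at h1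
        by_cases h : Odd b
        · rw [if_pos h, if_pos (by rw [Nat.odd_iff] at h ⊢; omega)]
        · rw [if_neg h, if_neg (by rw [Nat.odd_iff] at h ⊢; omega)]
      rw [hbend] at hIH
      rw [cc_cons, cc_cons, cc_cons, List.headD_cons]
      have := indic a b hba
      omega

lemma plink_of : ∀ N (C : List ℕ), C.length ≤ N →
    (∀ j, Odd j → (Even (C.getD j 0) ↔ Even (C.getD (j + 1) 0))) → plink C := by
  intro N
  induction N with
  | zero =>
    intro C hl _
    have : C = [] := List.length_eq_zero_iff.1 (by omega)
    subst this; trivial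
  | succ N ih =>
    intro C hl h
    cases C with
    | nil => trivial
    | cons a C1 =>
    cases C1 with
    | nil => trivial
    | cons b r =>
      rw [plink_cons]
      constructor
      · have h1 := h 1 (by rw [Nat.odd_iff])
        have e1 : (a :: b :: r).getD 1 0 = b := rfl
        have e2 : (a :: b :: r).getD (1 + 1) 0 = r.getD 0 0 := rfl
        rw [e1, e2, getD_zero_headD] at h1
        exact h1
      · apply ih r (by simp at hl; omega)
        intro j hj
        have h3 := h (j + 2) (by rw [Nat.odd_iff] at hj ⊢; omega)
        have e1 : (a :: b :: r).getD (j + 2) 0 = r.getD j 0 := rfl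
        have e2 : (a :: b :: r).getD (j + 2 + 1) 0 = r.getD (j + 1) 0 := rfl
        rw [e1, e2] at h3
        exact h3

lemma ccrange (p : ℕ → ℕ → Bool) : ∀ m (C : List ℕ), C.length = 2 * m →
    cc p C = (List.range m).countP (fun i => p (C.getD (2 * i) 0) (C.getD (2 * i + 1) 0)) := by
  intro m
  induction m with
  | zero =>
    intro C hC
    have : C = [] := List.length_eq_zero_iff.1 (by omega)
    subst this; rfl
  | succ m ih =>
    intro C hC
    cases C with
    | nil => simp at hC
    | cons a C1 =>
    cases C1 with
    | nil => simp at hC; omega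
    | cons b r =>
      rw [cc_cons, ih r (by simp at hC; omega)]
      rw [List.range_succ_eq_map, List.countP_cons, List.countP_map]
      have hfe : ∀ i, ((fun i => p (((a :: b :: r)).getD (2 * i) 0)
          ((a :: b :: r).getD (2 * i + 1) 0)) ∘ Nat.succ) i
          = p (r.getD (2 * i) 0) (r.getD (2 * i + 1) 0) := by
        intro i
        simp only [Function.comp]
        have e1 : 2 * Nat.succ i = (2 * i) + 1 + 1 := by omega
        rw [e1]
        simp [List.getD_cons_succ]
      have hcp : List.countP ((fun i => p (((a :: b :: r)).getD (2 * i) 0)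
          ((a :: b :: r).getD (2 * i + 1) 0)) ∘ Nat.succ) (List.range m)
          = List.countP (fun i => p (r.getD (2 * i) 0) (r.getD (2 * i + 1) 0))
            (List.range m) :=
        List.countP_congr (fun i _ => by rw [hfe i])
      rw [hcp]
      have h0 : p ((a :: b :: r).getD (2 * 0) 0) ((a :: b :: r).getD (2 * 0 + 1) 0) = p a b :=
        rfl
      simp only [h0]
      omega

lemma foldr_max_le {l : List ℕ} {b : ℕ} (h : ∀ x ∈ l, x ≤ b) : l.foldr max 0 ≤ b := by
  induction l with
  | nil => simp
  | cons a t ih =>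
    simp only [List.foldr_cons]
    exact max_le (h a (by simp)) (ih (fun x hx => h x (by simp [hx])))

lemma foldr_max_sorted {l : List ℕ} (hs : List.Pairwise (· ≥ ·) l) :
    l.foldr max 0 = l.headD 0 := by
  cases l with
  | nil => rfl
  | cons a t =>
    simp only [List.foldr_cons, List.headD_cons]
    exact max_eq_left (foldr_max_le (List.pairwise_cons.1 hs).1)

lemma length_transpose (l : List ℕ) : (transposeList l).length = l.foldr max 0 := by
  simp [transposeList]

lemma pad_length_ge (X : List ℕ) : X.length ≤ (padToEven X).length := by
  unfold padToEven
  split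
  · exact le_rfl
  · simp

lemma count_pad_pos (X : List ℕ) {v : ℕ} (hv : 0 < v) :
    (padToEven X).count v = X.count v := by
  unfold padToEven
  split
  · rfl
  · rw [List.count_append]
    have : List.count v [0] = 0 := by
      simp [List.count_cons]
      omega
    omega

lemma count_odd_even (l : List ℕ) :
    l.countP (fun x => decide (Odd x)) + l.countP (fun x => decide (Even x)) = l.length := by
  induction l with
  | nil => rfl
  | cons x t ih =>
    rw [List.countP_cons, List.countP_cons]
    rcases Nat.even_or_odd x with h | h
    · have h2 : ¬ Odd x := by rw [Nat.odd_iff]; rw [Nat.even_iff] at h; omega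
      simp [h, h2]
      omega
    · have h2 : ¬ Even x := by rw [Nat.even_iff]; rw [Nat.odd_iff] at h; omega
      simp [h, h2]
      omega

lemma afun_bridge {l : List ℕ} (hs : List.Pairwise (· ≥ ·) l) {m : ℕ}
    (hm : (padToEven (transposeList l)).length = 2 * m) :
    cc pA (padToEven (transposeList l)) = (List.range (2 * m)).countP (avP l) := by
  calc cc pA (padToEven (transposeList l))
      = (List.range m).countP (fun i => pA ((padToEven (transposeList l)).getD (2 * i) 0)
          ((padToEven (transposeList l)).getD (2 * i + 1) 0)) := ccrange pA m _ hm
    _ = (List.range m).countP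
          (fun i => decide (cnt l (2 * i + 1 + 1) < cnt l (2 * i + 1) ∧ Odd (cnt l (2 * i + 1)))) := by
        apply List.countP_congr
        intro i _
        rw [tgetD, tgetD]
        rfl
    _ = (List.range (2 * m)).countP
          (fun v => decide (Odd v) && decide (cnt l (v + 1) < cnt l v ∧ Odd (cnt l v))) :=
        (reindex_odd (fun v => decide (cnt l (v + 1) < cnt l v ∧ Odd (cnt l v))) m).symm
    _ = (List.range (2 * m)).countP (avP l) := by
        apply List.countP_congr
        intro v _
        unfold avP
        simp only [Bool.and_eq_true, decide_eq_true_eq]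
        have hsplit := cnt_split l v
        constructor
        · rintro ⟨hov, h1, h2⟩
          exact ⟨hov, List.count_pos_iff.1 (by omega), h2⟩
        · rintro ⟨hov, h1, h2⟩
          have := List.count_pos_iff.2 h1
          exact ⟨hov, by omega, h2⟩

lemma zfun_bridge {l : List ℕ} (hs : List.Pairwise (· ≥ ·) l) {m : ℕ}
    (hm : (padToEven (transposeList l)).length = 2 * m)
    (hlam : Odd (l.headD 0)) (hlt : l.headD 0 < 2 * m) :
    cc pZ (padToEven (transposeList l)) = 1 := by
  rw [ccrange pZ m _ hm]
  have key : ∀ i ∈ List.range m,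
      (fun i => pZ ((padToEven (transposeList l)).getD (2 * i) 0)
        ((padToEven (transposeList l)).getD (2 * i + 1) 0)) i
      = (fun i => decide (2 * i + 1 = l.headD 0)) i := by
    intro i _
    simp only
    rw [tgetD, tgetD]
    simp only [pZ]
    rw [decide_eq_decide]
    have h1 := sorted_cnt hs (show 0 < 2 * i + 1 by omega) 0
    have h2 := sorted_cnt hs (show 0 < 2 * i + 1 + 1 by omega) 0
    rw [getD_zero_headD] at h1 h2
    omega
  have hcp := List.countP_congr (fun i hi => by rw [key i hi] :
    ∀ i ∈ List.range m,
      (fun i => pZ ((padToEven (transposeList l)).getD (2 * i) 0)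
        ((padToEven (transposeList l)).getD (2 * i + 1) 0)) i = true
      ↔ (fun i => decide (2 * i + 1 = l.headD 0)) i = true)
  rw [hcp]
  exact countP_range_odd_uniq hlam m hlt

/-- Let `l` be a special type B partition of `2n+1`.
Row procedure: delete all even entries from the list of parts, then repeatedly delete two
equal adjacent entries at positions `2t` and `2t-1` (`t ≥ 1`) until no such pair remains;
the remaining number of entries is `2q+1`.
Column procedure: take the padded column list (padded with zeros to even length);
repeatedly delete two equal adjacent entries at positions `2t+1` and `2t` until no such
pair remains; then repeatedly delete two equal adjacent entries of even value at positions
`2t` and `2t-1` until no such pair remains; the remaining number of entries is `2q+2`.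
Both counts are independent of all choices, with the same `q`. -/
theorem typeB_LusztigQuotient_rows_eq_columns (n : ℕ) (l : List ℕ)
    (hpart : IsPartitionOf (2 * n + 1) l)
    (hB : ∀ e ∈ l, Even e → Even (l.count e))
    (hspecial : ∀ e ∈ transposeList l, Even e → Even ((transposeList l).count e)) :
    ∃ q : ℕ,
      (∀ M : List ℕ,
        Relation.ReflTransGen delStepO (l.filter (fun x => decide (Odd x))) M →
        (∀ M', ¬ delStepO M M') → M.length = 2 * q + 1) ∧
      (∀ M₁ M₂ : List ℕ,
        Relation.ReflTransGen delStepE (padToEven (transposeList l)) M₁ →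
        (∀ M', ¬ delStepE M₁ M') →
        Relation.ReflTransGen delStepOEvenVal M₁ M₂ →
        (∀ M', ¬ delStepOEvenVal M₂ M') → M₂.length = 2 * q + 2) := by
  obtain ⟨hsort, hpos, hsum⟩ := hpart
  have hOddSum : Odd l.sum := by rw [hsum]; exact ⟨n, by omega⟩
  have hBc : ∀ v, Even v → Even (l.count v) := by
    intro v hv
    by_cases hm : v ∈ l
    · exact hB v hm hv
    · rw [List.count_eq_zero_of_not_mem hm]; exact Even.zero
  have hTc : ∀ v, Even v → Even ((transposeList l).count v) := by
    intro v hv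
    by_cases hm : v ∈ transposeList l
    · exact hspecial v hm hv
    · rw [List.count_eq_zero_of_not_mem hm]; exact Even.zero
  have hppO : ∀ k, Odd (k + 2) ↔ Odd k := fun k => by rw [Nat.odd_iff, Nat.odd_iff]; omega
  have hppE : ∀ k, Even (k + 2) ↔ Even k := fun k => by rw [Nat.even_iff, Nat.even_iff]; omega
  have hppO1 : ∀ k, Odd k → ¬ Odd (k + 1) := fun k h h2 => by
    rw [Nat.odd_iff] at h h2; omega
  have hppE1 : ∀ k, Even k → ¬ Even (k + 1) := fun k h h2 => by
    rw [Nat.even_iff] at h h2; omega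
  have hvdE : ∀ a : ℕ, Even a ↔ (fun x : ℕ => decide (Even x)) a = true := fun a => by simp
  have hOeq : delStepO = dg (fun _ => True) Odd := by
    funext L M
    apply propext
    constructor
    · rintro ⟨a, l1, l2, h1, h2, h3⟩; exact ⟨a, l1, l2, trivial, h1, h2, h3⟩
    · rintro ⟨a, l1, l2, -, h1, h2, h3⟩; exact ⟨a, l1, l2, h1, h2, h3⟩
  have hEeq : delStepE = dg (fun _ => True) Even := by
    funext L M
    apply propext
    constructor
    · rintro ⟨a, l1, l2, h1, h2, h3⟩; exact ⟨a, l1, l2, trivial, h1, h2, h3⟩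
    · rintro ⟨a, l1, l2, -, h1, h2, h3⟩; exact ⟨a, l1, l2, h1, h2, h3⟩
  have hOEeq : delStepOEvenVal = dg Even Odd := rfl
  -- row side facts
  have hRodd : Odd (l.filter (fun x => decide (Odd x))).length := by
    rw [← List.countP_eq_length_filter]
    rw [Nat.odd_iff]
    have := sum_parity l
    rw [Nat.odd_iff] at hOddSum
    omega
  have hF1 := F1 l.length l (l.sum + 1) le_rfl hsort hOddSum hBc (by omega)
  have hRterm : Odd (redg (fun _ => true) (l.filter (fun x => decide (Odd x)))).length := by
    rw [Nat.odd_iff]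
    have := redg_length_mod (fun _ => true) (l.filter (fun x => decide (Odd x)))
    rw [Nat.odd_iff] at hRodd
    omega
  have hA1 : 1 ≤ Aval (l.sum + 1) l := by
    rw [Nat.odd_iff] at hRterm
    omega
  -- column side facts
  have hsC : List.Pairwise (· ≥ ·) (padToEven (transposeList l)) := sorted_pad (sorted_transpose l)
  have heC : Even (padToEven (transposeList l)).length := even_pad _
  obtain ⟨m0, hm0⟩ := even_pad (transposeList l)
  have hm2 : (padToEven (transposeList l)).length = 2 * m0 := by omega
  have hlne : l ≠ [] := by
    intro h; rw [h] at hOddSum; simp [Nat.odd_iff] at hOddSum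
  have hlam : Odd (l.headD 0) := maxodd hsort hOddSum hBc hTc
  have hlam_le : l.headD 0 ≤ 2 * m0 := by
    have h1 : l.foldr max 0 = l.headD 0 := foldr_max_sorted hsort
    have h2 := pad_length_ge (transposeList l)
    rw [length_transpose] at h2
    omega
  have hlamlt : l.headD 0 < 2 * m0 := by
    rcases hlam with ⟨k, hk⟩; omega
  have hAfun := afun_bridge hsort hm2
  have hmemhead : ∀ v ∈ l, v ≤ l.headD 0 := by
    cases l with
    | nil => intro v hv; exact absurd hv (List.not_mem_nil)
    | cons a t => exact fun v hv => sorted_head_ge hsort v hv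
  have hAK : (List.range (2 * m0)).countP (avP l) = Aval (l.sum + 1) l := by
    unfold Aval
    apply countP_range_eq
    · intro v hv
      unfold avP at hv
      rw [decide_eq_true_eq] at hv
      obtain ⟨hov, hmem, _⟩ := hv
      have := hmemhead v hmem
      rw [Nat.odd_iff] at hov
      omega
    · intro v hv
      unfold avP at hv
      rw [decide_eq_true_eq] at hv
      obtain ⟨_, hmem, _⟩ := hv
      have := List.single_le_sum (fun x _ => Nat.zero_le x) v hmem
      omega
  have hzf := zfun_bridge hsort hm2 hlam hlamlt
  have hplinkC : plink (padToEven (transposeList l)) := by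
    apply plink_of (padToEven (transposeList l)).length _ le_rfl
    intro j hj
    rw [tgetD, tgetD]
    have hsplit := cnt_split l (j + 1)
    have hcount := hBc (j + 1) (by rcases hj with ⟨k, hk⟩; exact ⟨k + 1, by omega⟩)
    rw [Nat.even_iff] at hcount
    rw [Nat.even_iff, Nat.even_iff]
    omega
  have hheadC : Odd ((padToEven (transposeList l)).headD 0) := by
    have h1 : (padToEven (transposeList l)).headD 0 = cnt l 1 := by
      rw [← getD_zero_headD, tgetD]
    have h2 : cnt l 1 = l.length := by
      unfold cnt
      rw [List.countP_eq_length]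
      intro a ha
      exact decide_eq_true (hpos a ha)
    have h6 : Even (l.countP (fun x => decide (Even x))) :=
      lemeven l.length l le_rfl hsort hBc _ (fun x _ hx => of_decide_eq_true hx)
    have h4 := count_odd_even l
    have h5 := sum_parity l
    rw [h1, h2, Nat.odd_iff]
    rw [Nat.odd_iff] at hOddSum
    rw [Nat.even_iff] at h6
    omega
  have hclaim := claim1 (padToEven (transposeList l)).length _ le_rfl hsC heC hplinkC
  rw [hzf, if_pos hheadC] at hclaim
  have hBA : cc pB (padToEven (transposeList l)) = Aval (l.sum + 1) l := by
    rw [← hAK, ← hAfun]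
    omega
  have hinv : ∀ v, Even v → 0 < v → Odd ((padToEven (transposeList l)).count v) →
      (padToEven (transposeList l)).head? = some v := by
    intro v hv h0 hodd
    exfalso
    rw [count_pad_pos _ h0] at hodd
    have := hTc v hv
    rw [Nat.even_iff] at this
    rw [Nat.odd_iff] at hodd
    omega
  have hF2 := F2 (padToEven (transposeList l)).length _ le_rfl hsC heC hinv
  refine ⟨Aval (l.sum + 1) l - 1, ?_, ?_⟩
  · intro M hM hterm
    rw [hOeq] at hM hterm
    have hreach := reach_redg (fun a => ⟨fun _ => rfl, fun _ => trivial⟩) hppO (l.filter (fun x => decide (Odd x))) hRodd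
    have hterm' := term_redg (fun a => ⟨fun _ => rfl, fun _ => trivial⟩) hppO hppO1 (l.filter (fun x => decide (Odd x))) hRodd
    have hMeq : M = redg (fun _ => true) (l.filter (fun x => decide (Odd x))) :=
      rtg_terminal_eq (dg_diamond hppO hppO1) hM hterm hreach hterm'
    rw [hMeq]
    omega
  · intro M₁ M₂ hM1 hterm1 hM2 hterm2
    rw [hEeq] at hM1 hterm1
    rw [hOEeq] at hM2 hterm2
    have hreachC := reach_redg (fun a => ⟨fun _ => rfl, fun _ => trivial⟩) hppE (padToEven (transposeList l)) heC
    have htermC := term_redg (fun a => ⟨fun _ => rfl, fun _ => trivial⟩) hppE hppE1 (padToEven (transposeList l)) heC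
    have hM1eq : M₁ = redg (fun _ => true) (padToEven (transposeList l)) :=
      rtg_terminal_eq (dg_diamond hppE hppE1) hM1 hterm1 hreachC htermC
    have hne : redg (fun _ => true) (padToEven (transposeList l)) ≠ [] := by
      intro h
      rw [h] at hF2
      have h0 : (nf2 ([] : List ℕ)).length = 0 := rfl
      rw [h0] at hF2
      omega
    obtain ⟨x, w, hxw⟩ : ∃ x w, redg (fun _ => true) (padToEven (transposeList l)) = x :: w := by
      cases h : redg (fun _ => true) (padToEven (transposeList l)) with
      | nil => exact absurd h hne
      | cons x w => exact ⟨x, w, rfl⟩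
    have hwodd : Odd w.length := by
      have hmod := redg_length_mod (fun _ => true) (padToEven (transposeList l))
      rw [hxw, hm2] at hmod
      rw [Nat.odd_iff]
      simp at hmod
      omega
    have hreach2 := reach_nf2 hvdE hppO x w hwodd
    have hterm2' := term_nf2 hvdE hppO hppO1 x w hwodd
    rw [hM1eq, hxw] at hM2
    have hM2eq : M₂ = x :: redg (fun a => decide (Even a)) w :=
      rtg_terminal_eq (dg_diamond hppO hppO1) hM2 hterm2 hreach2 hterm2'
    rw [hxw] at hF2
    have hnf : (nf2 (x :: w)).length = (redg (fun a => decide (Even a)) w).length + 1 := by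
      simp [nf2]
    rw [hM2eq]
    simp only [List.length_cons]
    omega
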